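/- Let A be a unital complex *-algebra and (r_k)_{k∈ℤ^d} a family of elements of A such that all the elements r_k together with all the adjoints r_k* pairwise commute. Define δ_k(a) := a r_k − r_k a, δ_k†(a) := r_k* a − a r_k*, and ℒ_k(a) := (1/2)(δ_k†(a)·r_k + r_k*·δ_k(a)). Then for every n ≥ 1, all k₁,…,k_n ∈ ℤ^d and all x ∈ A: ℒ_{k_n}(ℒ_{k_{n−1}}(⋯ℒ_{k_1}(x)⋯)) = 2^{−n} · Σ_{P ⊆ {1,…,n}} (Π_{l∈P^c} r_{k_l})* · (δ^{ε_n}_{k_n} ∘ ⋯ ∘ δ^{ε₁}_{k₁})(x) · (Π_{l∈P} r_{k_l}), where for each subset P the signs are ε_l = −1 (i.e. δ†_{k_l}) if l ∈ P and ε_l = +1 (i.e. δ_{k_l}) if l ∈ P^c, and the products Π over P and its complement P^c = {1,…,n}∖P are well defined by commutativity of the r_{k_l}. -/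

import Mathlib

open scoped BigOperators

/-- Iterated application of the (signed) derivations
`δ_k(a) = a r_k - r_k a` (sign `+1`), `δ†_k(a) = r_k* a - a r_k*` (sign `-1`),
and the Lindblad map `ℒ_k(a) = (1/2)(δ†_k(a) r_k + r_k* δ_k(a))` (sign `0`),
applied first with index `0` (innermost) and last with index `n-1` (outermost). -/
noncomputable def deltaIter {A K : Type*} [Ring A] [StarRing A] [Module ℂ A]
    (r : K → A) {n : ℕ} (ε : Fin n → ℤ) (k : Fin n → K) (x : A) : A :=
  (List.ofFn fun l : Fin n => fun a : A =>
    if ε l = 1 then a * r (k l) - r (k l) * a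
    else if ε l = -1 then star (r (k l)) * a - a * star (r (k l))
    else (2 : ℂ)⁻¹ • ((star (r (k l)) * a - a * star (r (k l))) * r (k l)
          + star (r (k l)) * (a * r (k l) - r (k l) * a))).foldl (fun a f => f a) x

theorem deltaIter_zero {A K : Type*} [Ring A] [StarRing A] [Module ℂ A]
    (r : K → A) (ε : Fin 0 → ℤ) (k : Fin 0 → K) (x : A) :
    deltaIter r ε k x = x := by
  simp [deltaIter]

theorem deltaIter_succ {A K : Type*} [Ring A] [StarRing A] [Module ℂ A]
    (r : K → A) {n : ℕ} (ε : Fin (n+1) → ℤ) (k : Fin (n+1) → K) (x : A) :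
    deltaIter r ε k x =
      (fun a : A =>
        if ε (Fin.last n) = 1 then a * r (k (Fin.last n)) - r (k (Fin.last n)) * a
        else if ε (Fin.last n) = -1 then
          star (r (k (Fin.last n))) * a - a * star (r (k (Fin.last n)))
        else (2 : ℂ)⁻¹ • ((star (r (k (Fin.last n))) * a - a * star (r (k (Fin.last n))))
              * r (k (Fin.last n))
          + star (r (k (Fin.last n))) * (a * r (k (Fin.last n)) - r (k (Fin.last n)) * a)))
      (deltaIter r (fun i => ε i.castSucc) (fun i => k i.castSucc) x) := by
  rw [deltaIter, List.ofFn_succ', List.concat_eq_append, List.foldl_append]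
  rfl

private lemma comm_left {A : Type*} [Ring A] {a b : A} (h : Commute a b) (x : A) :
    a * (b * x) = b * (a * x) := by rw [← mul_assoc, h.eq, mul_assoc]

noncomputable def Lop {A : Type*} [Ring A] [StarRing A] [Algebra ℂ A] (c : A) : A →ₗ[ℂ] A where
  toFun a := (2 : ℂ)⁻¹ • ((star c * a - a * star c) * c + star c * (a * c - c * a))
  map_add' a b := by
    rw [← smul_add]
    simp only [mul_add, add_mul, sub_mul, mul_sub]
    abel
  map_smul' μ a := by
    simp only [RingHom.id_apply]
    rw [smul_comm]
    congr 1
    simp only [mul_smul_comm, smul_mul_assoc, ← smul_sub, ← smul_add]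

lemma Lop_conj {A : Type*} [Ring A] [StarRing A] [Algebra ℂ A] (c s t y : A)
    (h1 : Commute c t) (h2 : Commute (star c) t)
    (h3 : Commute c (star s)) (h4 : Commute (star c) (star s)) :
    Lop c (star s * y * t) =
      (2 : ℂ)⁻¹ • (star s * (star c * y - y * star c) * (c * t)
        + (star s * star c) * (y * c - c * y) * t) := by
  have m1 : star c * (star s * y * t) * c = star s * (star c * y) * (c * t) := by
    simp only [mul_assoc]
    rw [← h1.eq, comm_left h4]
  have m2 : star s * y * t * star c * c = star s * (y * star c) * (c * t) := by
    simp only [mul_assoc]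
    rw [← comm_left h2 c, ← h1.eq]
  have m3 : star c * (star s * y * t * c) = star s * star c * (y * c) * t := by
    simp only [mul_assoc]
    rw [h1.eq, comm_left h4]
  have m4 : star c * (c * (star s * y * t)) = star s * star c * (c * y) * t := by
    simp only [mul_assoc]
    rw [comm_left h3, comm_left h4]
  show (2 : ℂ)⁻¹ • ((star c * (star s * y * t) - (star s * y * t) * star c) * c
      + star c * ((star s * y * t) * c - c * (star s * y * t))) = _
  congr 1
  simp only [sub_mul, mul_sub]
  rw [m1, m2, m3, m4]

section FinsetSplit

variable {n : ℕ}

def csEmb (n : ℕ) : Fin n ↪ Fin (n + 1) := ⟨Fin.castSucc, Fin.castSucc_injective n⟩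

lemma mem_map_csEmb {Q : Finset (Fin n)} {i : Fin n} :
    i.castSucc ∈ Q.map (csEmb n) ↔ i ∈ Q := by
  simp [csEmb]

lemma last_not_mem_map (Q : Finset (Fin n)) : Fin.last n ∉ Q.map (csEmb n) := by
  simp only [Finset.mem_map, csEmb, Function.Embedding.coeFn_mk]
  rintro ⟨i, -, h⟩
  exact (Fin.castSucc_lt_last i).ne h

lemma compl_map_csEmb (Q : Finset (Fin n)) :
    (Q.map (csEmb n))ᶜ = insert (Fin.last n) (Qᶜ.map (csEmb n)) := by
  ext j
  induction j using Fin.lastCases with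
  | last =>
      simp [last_not_mem_map Q]
  | cast i =>
      simp only [Finset.mem_compl, mem_map_csEmb, Finset.mem_insert, mem_map_csEmb]
      have : i.castSucc ≠ Fin.last n := (Fin.castSucc_lt_last i).ne
      simp [this]

lemma compl_insert_last (Q : Finset (Fin n)) :
    (insert (Fin.last n) (Q.map (csEmb n)))ᶜ = Qᶜ.map (csEmb n) := by
  rw [Finset.compl_insert, compl_map_csEmb,
    Finset.erase_insert (last_not_mem_map Qᶜ)]

noncomputable def finsetSuccEquiv (n : ℕ) : Finset (Fin n) × Bool ≃ Finset (Fin (n + 1)) where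
  toFun p := if p.2 then insert (Fin.last n) (p.1.map (csEmb n)) else p.1.map (csEmb n)
  invFun P := (P.preimage Fin.castSucc (Fin.castSucc_injective n).injOn, Fin.last n ∈ P)
  left_inv := by
    rintro ⟨Q, b⟩
    cases b <;>
      · ext i
        · simp [Finset.mem_preimage, csEmb, Fin.castSucc_inj, (Fin.castSucc_lt_last i).ne,
            last_not_mem_map Q]
        · simp [last_not_mem_map Q]
  right_inv P := by
    ext j
    induction j using Fin.lastCases with
    | last =>
        by_cases h : Fin.last n ∈ P <;> simp [h, last_not_mem_map, csEmb] <;>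
          exact fun x _ => (Fin.castSucc_lt_last x).ne
    | cast i =>
        by_cases h : Fin.last n ∈ P <;>
          simp [h, Finset.mem_preimage, csEmb, Fin.castSucc_inj, (Fin.castSucc_lt_last i).ne]

lemma sum_finset_succ {M : Type*} [AddCommMonoid M] (f : Finset (Fin (n + 1)) → M) :
    ∑ P : Finset (Fin (n + 1)), f P
      = ∑ Q : Finset (Fin n),
          (f (Q.map (csEmb n)) + f (insert (Fin.last n) (Q.map (csEmb n)))) := by
  rw [← (finsetSuccEquiv n).sum_comp f]
  rw [Fintype.sum_prod_type]
  refine Finset.sum_congr rfl fun Q _ => ?_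
  rw [Fintype.sum_bool]
  simp [finsetSuccEquiv, add_comm]

lemma noncommProd_finset_map {α γ β : Type*} [Monoid β] (s : Finset α) (e : α ↪ γ)
    (f : γ → β) (comm) (comm') :
    (s.map e).noncommProd f comm = s.noncommProd (fun i => f (e i)) comm' := by
  unfold Finset.noncommProd
  congr 1
  simp [Finset.map_val, Multiset.map_map]

end FinsetSplit

/-- Lemma 3.1(ii): the iterated Lindbladian `ℒ_{k_n} ∘ ⋯ ∘ ℒ_{k_1}` expands as
`2^{-n} ∑_{P ⊆ {1,…,n}} (∏_{l ∈ Pᶜ} r_{k_l})* ⬝ δ(k̄, ε̄_P)(x) ⬝ (∏_{l ∈ P} r_{k_l})`,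
where `ε_l = -1` for `l ∈ P` and `ε_l = +1` for `l ∈ Pᶜ`. -/
theorem lemma31ii {A K : Type*} [Ring A] [Algebra ℂ A] [StarRing A]
    (r : K → A)
    (hcomm : ∀ p q : K, Commute (r p) (r q))
    (hcommstar : ∀ p q : K, Commute (star (r p)) (r q))
    (n : ℕ) (hn : 1 ≤ n) (k : Fin n → K) (x : A) :
    deltaIter r (fun _ : Fin n => (0 : ℤ)) k x
      = (2 : ℂ)⁻¹ ^ n • ∑ P : Finset (Fin n),
          star (Finset.noncommProd Pᶜ (fun l => r (k l))
              (fun a _ b _ _ => hcomm (k a) (k b)))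
            * deltaIter r (fun l => if l ∈ P then (-1 : ℤ) else 1) k x
            * Finset.noncommProd P (fun l => r (k l))
              (fun a _ b _ _ => hcomm (k a) (k b)) := by
  clear hn
  induction n with
  | zero =>
      have huniv : (Finset.univ : Finset (Finset (Fin 0))) = {∅} := by decide
      rw [deltaIter_zero, huniv, Finset.sum_singleton, deltaIter_zero]
      simp
      exact (mul_one x).symm.trans (congrArg (x * ·) (Finset.noncommProd_empty _ _).symm)
  | succ n IH =>
      have hL : deltaIter r (fun _ : Fin (n+1) => (0:ℤ)) k x
          = Lop (r (k (Fin.last n)))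
              (deltaIter r (fun _ : Fin n => (0:ℤ)) (fun i => k i.castSucc) x) := by
        rw [deltaIter_succ]
        norm_num [Lop]
      rw [hL, IH (fun i => k i.castSucc), map_smul, map_sum]
      have key : ∀ Q : Finset (Fin n),
          Lop (r (k (Fin.last n)))
            (star (Finset.noncommProd Qᶜ (fun l => r (k l.castSucc))
                (fun a _ b _ _ => hcomm (k a.castSucc) (k b.castSucc)))
              * deltaIter r (fun l => if l ∈ Q then (-1 : ℤ) else 1)
                  (fun i => k i.castSucc) x
              * Finset.noncommProd Q (fun l => r (k l.castSucc))
                (fun a _ b _ _ => hcomm (k a.castSucc) (k b.castSucc)))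
          = (2 : ℂ)⁻¹ •
            ((star (Finset.noncommProd (Q.map (csEmb n))ᶜ (fun l => r (k l))
                (fun a _ b _ _ => hcomm (k a) (k b)))
              * deltaIter r (fun l => if l ∈ Q.map (csEmb n) then (-1 : ℤ) else 1) k x
              * Finset.noncommProd (Q.map (csEmb n)) (fun l => r (k l))
                (fun a _ b _ _ => hcomm (k a) (k b)))
            + (star (Finset.noncommProd (insert (Fin.last n) (Q.map (csEmb n)))ᶜ
                  (fun l => r (k l)) (fun a _ b _ _ => hcomm (k a) (k b)))
              * deltaIter r
                  (fun l => if l ∈ insert (Fin.last n) (Q.map (csEmb n)) then (-1 : ℤ) else 1)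
                  k x
              * Finset.noncommProd (insert (Fin.last n) (Q.map (csEmb n)))
                  (fun l => r (k l)) (fun a _ b _ _ => hcomm (k a) (k b)))) := by
        intro Q
        have h1 : Commute (r (k (Fin.last n)))
            (Finset.noncommProd Q (fun l => r (k l.castSucc))
              (fun a _ b _ _ => hcomm (k a.castSucc) (k b.castSucc))) :=
          Finset.noncommProd_commute _ _ _ _ fun i _ => hcomm _ _
        have h2 : Commute (star (r (k (Fin.last n))))
            (Finset.noncommProd Q (fun l => r (k l.castSucc))
              (fun a _ b _ _ => hcomm (k a.castSucc) (k b.castSucc))) :=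
          Finset.noncommProd_commute _ _ _ _ fun i _ => hcommstar _ _
        have h2' : Commute (star (r (k (Fin.last n))))
            (Finset.noncommProd Qᶜ (fun l => r (k l.castSucc))
              (fun a _ b _ _ => hcomm (k a.castSucc) (k b.castSucc))) :=
          Finset.noncommProd_commute _ _ _ _ fun i _ => hcommstar _ _
        have h3 : Commute (r (k (Fin.last n)))
            (star (Finset.noncommProd Qᶜ (fun l => r (k l.castSucc))
              (fun a _ b _ _ => hcomm (k a.castSucc) (k b.castSucc)))) :=
          commute_star_comm.mp h2'
        have h1' : Commute (r (k (Fin.last n)))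
            (Finset.noncommProd Qᶜ (fun l => r (k l.castSucc))
              (fun a _ b _ _ => hcomm (k a.castSucc) (k b.castSucc))) :=
          Finset.noncommProd_commute _ _ _ _ fun i _ => hcomm _ _
        have h4 : Commute (star (r (k (Fin.last n))))
            (star (Finset.noncommProd Qᶜ (fun l => r (k l.castSucc))
              (fun a _ b _ _ => hcomm (k a.castSucc) (k b.castSucc)))) :=
          h1'.star_star
        refine (Lop_conj (r (k (Fin.last n))) _ _ _ h1 h2 h3 h4).trans ?_
        -- now identify the two summands
        have f2 : Finset.noncommProd (Q.map (csEmb n)) (fun l => r (k l))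
              (fun a _ b _ _ => hcomm (k a) (k b))
            = Finset.noncommProd Q (fun l => r (k l.castSucc))
              (fun a _ b _ _ => hcomm (k a.castSucc) (k b.castSucc)) :=
          noncommProd_finset_map _ _ _ _ _
        have f2c : Finset.noncommProd (Qᶜ.map (csEmb n)) (fun l => r (k l))
              (fun a _ b _ _ => hcomm (k a) (k b))
            = Finset.noncommProd Qᶜ (fun l => r (k l.castSucc))
              (fun a _ b _ _ => hcomm (k a.castSucc) (k b.castSucc)) :=
          noncommProd_finset_map _ _ _ _ _
        have f1 : Finset.noncommProd (Q.map (csEmb n))ᶜ (fun l => r (k l))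
              (fun a _ b _ _ => hcomm (k a) (k b))
            = r (k (Fin.last n)) * Finset.noncommProd Qᶜ (fun l => r (k l.castSucc))
                (fun a _ b _ _ => hcomm (k a.castSucc) (k b.castSucc)) := by
          refine (Finset.noncommProd_congr (compl_map_csEmb Q) (fun _ _ => rfl) _).trans ?_
          refine (Finset.noncommProd_insert_of_notMem _ _ _ _ (last_not_mem_map Qᶜ)).trans ?_
          exact congrArg _ (noncommProd_finset_map _ _ _ _ _)
        have f4 : Finset.noncommProd (insert (Fin.last n) (Q.map (csEmb n)))
              (fun l => r (k l)) (fun a _ b _ _ => hcomm (k a) (k b))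
            = r (k (Fin.last n)) * Finset.noncommProd Q (fun l => r (k l.castSucc))
                (fun a _ b _ _ => hcomm (k a.castSucc) (k b.castSucc)) := by
          refine (Finset.noncommProd_insert_of_notMem _ _ _ _ (last_not_mem_map Q)).trans ?_
          exact congrArg _ (noncommProd_finset_map _ _ _ _ _)
        have f5 : Finset.noncommProd (insert (Fin.last n) (Q.map (csEmb n)))ᶜ
              (fun l => r (k l)) (fun a _ b _ _ => hcomm (k a) (k b))
            = Finset.noncommProd Qᶜ (fun l => r (k l.castSucc))
                (fun a _ b _ _ => hcomm (k a.castSucc) (k b.castSucc)) := by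
          refine (Finset.noncommProd_congr (compl_insert_last Q) (fun _ _ => rfl) _).trans ?_
          exact noncommProd_finset_map _ _ _ _ _
        have f3 : deltaIter r (fun l => if l ∈ Q.map (csEmb n) then (-1 : ℤ) else 1) k x
            = deltaIter r (fun l => if l ∈ Q then (-1 : ℤ) else 1)
                (fun i => k i.castSucc) x * r (k (Fin.last n))
              - r (k (Fin.last n)) * deltaIter r (fun l => if l ∈ Q then (-1 : ℤ) else 1)
                (fun i => k i.castSucc) x := by
          rw [deltaIter_succ]
          have hne : ∀ i : Fin n, i.castSucc ≠ Fin.last n := fun i => (Fin.castSucc_lt_last i).ne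
          simp [hne, csEmb, Fin.castSucc_inj]
        have f6 : deltaIter r
              (fun l => if l ∈ insert (Fin.last n) (Q.map (csEmb n)) then (-1 : ℤ) else 1) k x
            = star (r (k (Fin.last n)))
                * deltaIter r (fun l => if l ∈ Q then (-1 : ℤ) else 1)
                  (fun i => k i.castSucc) x
              - deltaIter r (fun l => if l ∈ Q then (-1 : ℤ) else 1)
                  (fun i => k i.castSucc) x * star (r (k (Fin.last n))) := by
          rw [deltaIter_succ]
          have hne : ∀ i : Fin n, i.castSucc ≠ Fin.last n := fun i => (Fin.castSucc_lt_last i).ne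
          simp [Finset.mem_insert, hne, csEmb, Fin.castSucc_inj]
        rw [f1, f2, f3, f4, f5, f6, star_mul, add_comm]
      rw [sum_finset_succ
        (f := fun P : Finset (Fin (n+1)) =>
          star (Finset.noncommProd Pᶜ (fun l => r (k l))
              (fun a _ b _ _ => hcomm (k a) (k b)))
            * deltaIter r (fun l => if l ∈ P then (-1 : ℤ) else 1) k x
            * Finset.noncommProd P (fun l => r (k l))
              (fun a _ b _ _ => hcomm (k a) (k b)))]
      refine Eq.trans (congrArg (HSMul.hSMul ((2:ℂ)⁻¹ ^ n))
        (Finset.sum_congr rfl fun Q _ => key Q)) ?_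
      rw [← Finset.smul_sum, smul_smul, ← pow_succ]
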